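/- Let Ω be nonempty and let X₁, Y₁, X₂, Y₂ be uncertain variables with finite ranges such that the pairs (X₁,Y₁) and (X₂,Y₂) are unrelated: the joint range of (X₁,Y₁,X₂,Y₂) equals ⟦X₁,Y₁⟧ × ⟦X₂,Y₂⟧. Then min over (y₁,y₂) ∈ ⟦(Y₁,Y₂)⟧ of |⟦(X₁,X₂) | Y₁=y₁, Y₂=y₂⟧| equals (min_{y₁∈⟦Y₁⟧}|⟦X₁|Y₁=y₁⟧|)·(min_{y₂∈⟦Y₂⟧}|⟦X₂|Y₂=y₂⟧|), and consequently L((X₁,X₂) → (Y₁,Y₂)) = L(X₁ → Y₁) + L(X₂ → Y₂). -/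
import Mathlib


open Set

/-- Conditional range ⟦X | Y = y⟧ = {X ω : Y ω = y}. -/
def crange {Ω 𝕏 𝕐 : Type*} (X : Ω → 𝕏) (Y : Ω → 𝕐) (y : 𝕐) : Set 𝕏 :=
  {x | ∃ ω, Y ω = y ∧ X ω = x}

/-- min_{y ∈ ⟦Y⟧} |⟦X | Y = y⟧|. -/
noncomputable def minCond {Ω 𝕏 𝕐 : Type*} (X : Ω → 𝕏) (Y : Ω → 𝕐) : ℕ :=
  sInf ((fun y => (crange X Y y).ncard) '' Set.range Y)

/-- Non-stochastic brute-force guessing leakage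
L(X → Y) = log₂(|⟦X⟧| / min_{y ∈ ⟦Y⟧} |⟦X|Y=y⟧|). -/
noncomputable def leak {Ω 𝕏 𝕐 : Type*} (X : Ω → 𝕏) (Y : Ω → 𝕐) : ℝ :=
  Real.logb 2 (((Set.range X).ncard : ℝ) / (minCond X Y : ℝ))

/-- Maximal non-stochastic brute-force leakage (closed formula)
L⋆(X → Y) = log₂(|⟦X⟧| − min_{y∈⟦Y⟧}|⟦X|Y=y⟧| + 1). -/
noncomputable def maxLeak {Ω 𝕏 𝕐 : Type*} (X : Ω → 𝕏) (Y : Ω → 𝕐) : ℝ :=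
  Real.logb 2 (((Set.range X).ncard : ℝ) - (minCond X Y : ℝ) + 1)

lemma my_ncard_prod {α β : Type*} (s : Set α) (t : Set β) :
    (s ×ˢ t).ncard = s.ncard * t.ncard := by
  rw [← Nat.card_coe_set_eq, ← Nat.card_coe_set_eq, ← Nat.card_coe_set_eq,
    Nat.card_congr (Equiv.Set.prod s t), Nat.card_prod]

lemma crange_nonempty {Ω 𝕏 𝕐 : Type*} (X : Ω → 𝕏) (Y : Ω → 𝕐) {y : 𝕐}
    (hy : y ∈ Set.range Y) : (crange X Y y).Nonempty := by
  obtain ⟨ω, rfl⟩ := hy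
  exact ⟨X ω, ω, rfl, rfl⟩

lemma crange_subset {Ω 𝕏 𝕐 : Type*} (X : Ω → 𝕏) (Y : Ω → 𝕐) (y : 𝕐) :
    crange X Y y ⊆ Set.range X := by
  rintro x ⟨ω, -, rfl⟩; exact ⟨ω, rfl⟩

lemma minCond_mem {Ω 𝕏 𝕐 : Type*} [Nonempty Ω] (X : Ω → 𝕏) (Y : Ω → 𝕐) :
    minCond X Y ∈ (fun y => (crange X Y y).ncard) '' Set.range Y := by
  apply Nat.sInf_mem
  exact (Set.range_nonempty Y).image _

lemma minCond_pos {Ω 𝕏 𝕐 : Type*} [Nonempty Ω] (X : Ω → 𝕏) (Y : Ω → 𝕐)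
    (hX : (Set.range X).Finite) : 0 < minCond X Y := by
  obtain ⟨y, hy, hv⟩ := minCond_mem X Y
  rw [← hv]
  exact Set.ncard_pos (hX.subset (crange_subset X Y y)) |>.mpr (crange_nonempty X Y hy)

theorem stmt_17 {Ω 𝕏₁ 𝕐₁ 𝕏₂ 𝕐₂ : Type*} [Nonempty Ω]
    (X₁ : Ω → 𝕏₁) (Y₁ : Ω → 𝕐₁) (X₂ : Ω → 𝕏₂) (Y₂ : Ω → 𝕐₂)
    (hX₁ : (Set.range X₁).Finite) (hY₁ : (Set.range Y₁).Finite)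
    (hX₂ : (Set.range X₂).Finite) (hY₂ : (Set.range Y₂).Finite)
    (hunrel : Set.range (fun ω => ((X₁ ω, Y₁ ω), (X₂ ω, Y₂ ω))) =
      (Set.range fun ω => (X₁ ω, Y₁ ω)) ×ˢ (Set.range fun ω => (X₂ ω, Y₂ ω))) :
    minCond (fun ω => (X₁ ω, X₂ ω)) (fun ω => (Y₁ ω, Y₂ ω)) =
      minCond X₁ Y₁ * minCond X₂ Y₂ ∧
    leak (fun ω => (X₁ ω, X₂ ω)) (fun ω => (Y₁ ω, Y₂ ω)) =
      leak X₁ Y₁ + leak X₂ Y₂ := by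
  -- range of (X₁,X₂) factorizes
  have hXrange : Set.range (fun ω => (X₁ ω, X₂ ω)) = Set.range X₁ ×ˢ Set.range X₂ := by
    ext ⟨x₁, x₂⟩
    simp only [Set.mem_range, Set.mem_prod, Prod.mk.injEq]
    constructor
    · rintro ⟨ω, h1, h2⟩; exact ⟨⟨ω, h1⟩, ⟨ω, h2⟩⟩
    · rintro ⟨⟨ω₁, h1⟩, ⟨ω₂, h2⟩⟩
      have hmem : ((x₁, Y₁ ω₁), (x₂, Y₂ ω₂)) ∈
          Set.range (fun ω => ((X₁ ω, Y₁ ω), (X₂ ω, Y₂ ω))) := by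
        rw [hunrel]
        exact ⟨⟨ω₁, by simp [h1]⟩, ⟨ω₂, by simp [h2]⟩⟩
      obtain ⟨ω, hω⟩ := hmem
      simp only [Prod.mk.injEq] at hω
      exact ⟨ω, hω.1.1, hω.2.1⟩
  -- range of (Y₁,Y₂) factorizes
  have hYrange : Set.range (fun ω => (Y₁ ω, Y₂ ω)) = Set.range Y₁ ×ˢ Set.range Y₂ := by
    ext ⟨y₁, y₂⟩
    simp only [Set.mem_range, Set.mem_prod, Prod.mk.injEq]
    constructor
    · rintro ⟨ω, h1, h2⟩; exact ⟨⟨ω, h1⟩, ⟨ω, h2⟩⟩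
    · rintro ⟨⟨ω₁, h1⟩, ⟨ω₂, h2⟩⟩
      have hmem : ((X₁ ω₁, y₁), (X₂ ω₂, y₂)) ∈
          Set.range (fun ω => ((X₁ ω, Y₁ ω), (X₂ ω, Y₂ ω))) := by
        rw [hunrel]
        exact ⟨⟨ω₁, by simp [h1]⟩, ⟨ω₂, by simp [h2]⟩⟩
      obtain ⟨ω, hω⟩ := hmem
      simp only [Prod.mk.injEq] at hω
      exact ⟨ω, hω.1.2, hω.2.2⟩
  -- conditional ranges factorize
  have hcr : ∀ y₁ y₂, crange (fun ω => (X₁ ω, X₂ ω)) (fun ω => (Y₁ ω, Y₂ ω)) (y₁, y₂)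
      = crange X₁ Y₁ y₁ ×ˢ crange X₂ Y₂ y₂ := by
    intro y₁ y₂
    ext ⟨x₁, x₂⟩
    simp only [crange, Set.mem_setOf_eq, Set.mem_prod, Prod.mk.injEq]
    constructor
    · rintro ⟨ω, ⟨hy1, hy2⟩, hx1, hx2⟩
      exact ⟨⟨ω, hy1, hx1⟩, ⟨ω, hy2, hx2⟩⟩
    · rintro ⟨⟨ω₁, hy1, hx1⟩, ⟨ω₂, hy2, hx2⟩⟩
      have hmem : ((x₁, y₁), (x₂, y₂)) ∈
          Set.range (fun ω => ((X₁ ω, Y₁ ω), (X₂ ω, Y₂ ω))) := by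
        rw [hunrel]
        exact ⟨⟨ω₁, by simp [hx1, hy1]⟩, ⟨ω₂, by simp [hx2, hy2]⟩⟩
      obtain ⟨ω, hω⟩ := hmem
      simp only [Prod.mk.injEq] at hω
      exact ⟨ω, ⟨hω.1.2, hω.2.2⟩, hω.1.1, hω.2.1⟩
  -- the minCond equality
  have hmin : minCond (fun ω => (X₁ ω, X₂ ω)) (fun ω => (Y₁ ω, Y₂ ω)) =
      minCond X₁ Y₁ * minCond X₂ Y₂ := by
    obtain ⟨y₁, hy₁, hv₁⟩ := minCond_mem X₁ Y₁
    obtain ⟨y₂, hy₂, hv₂⟩ := minCond_mem X₂ Y₂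
    apply le_antisymm
    · apply Nat.sInf_le
      refine ⟨(y₁, y₂), ?_, ?_⟩
      · rw [hYrange]; exact ⟨hy₁, hy₂⟩
      · simp only at hv₁ hv₂
        simp only [hcr, my_ncard_prod, hv₁, hv₂]
    · apply le_csInf ((Set.range_nonempty _).image _)
      rintro b ⟨⟨z₁, z₂⟩, hz, rfl⟩
      rw [hYrange] at hz
      simp only [hcr, my_ncard_prod]
      exact Nat.mul_le_mul (Nat.sInf_le ⟨z₁, hz.1, rfl⟩) (Nat.sInf_le ⟨z₂, hz.2, rfl⟩)
  refine ⟨hmin, ?_⟩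
  -- positivity facts
  have ha₁ : (0:ℝ) < (Set.range X₁).ncard := by
    exact_mod_cast (Set.ncard_pos hX₁).mpr (Set.range_nonempty X₁)
  have ha₂ : (0:ℝ) < (Set.range X₂).ncard := by
    exact_mod_cast (Set.ncard_pos hX₂).mpr (Set.range_nonempty X₂)
  have hm₁ : (0:ℝ) < (minCond X₁ Y₁ : ℝ) := by exact_mod_cast minCond_pos X₁ Y₁ hX₁
  have hm₂ : (0:ℝ) < (minCond X₂ Y₂ : ℝ) := by exact_mod_cast minCond_pos X₂ Y₂ hX₂
  unfold leak
  rw [hmin, hXrange, my_ncard_prod]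
  push_cast
  rw [mul_div_mul_comm]
  rw [Real.logb_mul (by positivity) (by positivity)]
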